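/- For all 0 < δ < 1 and 0 < δ' < 1 there exists a constant C₁ = C₁(δ, δ') > 0 such that for all a, b, z in the unit disc 𝔻 with |a| ≤ δ', |b| ≤ δ' and |z| ≤ δ, the hyperbolic distance satisfies [T_a(z), T_b(z)] ≤ C₁ · [a, b], where T_a(z) = (a+z)/(1+ā z). -/

import Mathlib

/- Statement 7: For all 0 < δ < 1 and 0 < δ' < 1 there exists C₁ = C₁(δ, δ') > 0 such that
for all a, b, z in the unit disc 𝔻 with |a| ≤ δ', |b| ≤ δ' and |z| ≤ δ, the hyperbolic
distance satisfies [T_a(z), T_b(z)] ≤ C₁ · [a, b], where T_a(z) = (a+z)/(1+ā z). -/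

open Complex

/-- The Möbius transformation `T_a(z) = (a + z) / (1 + ā z)` of the unit disc. -/
noncomputable def Tmob (a z : ℂ) : ℂ := (a + z) / (1 + (starRingEnd ℂ) a * z)

/-- The hyperbolic (Poincaré) distance on the unit disc:
`[a, b] = log ((1 + t) / (1 - t))` where `t = |(a - b) / (1 - ā b)|`
(this equals `2 artanh t`). -/
noncomputable def hypDist (a b : ℂ) : ℝ :=
  Real.log ((1 + ‖((a - b) / (1 - (starRingEnd ℂ) a * b))‖) /
    (1 - ‖((a - b) / (1 - (starRingEnd ℂ) a * b))‖))

lemma key_normSq (u v : ℂ) :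
    Complex.normSq (1 - (starRingEnd ℂ) u * v) =
    Complex.normSq (u - v) + (1 - Complex.normSq u) * (1 - Complex.normSq v) := by
  simp only [Complex.normSq_apply, Complex.sub_re, Complex.sub_im, Complex.mul_re,
    Complex.mul_im, Complex.one_re, Complex.one_im, Complex.conj_re, Complex.conj_im]
  ring

lemma log_ratio_le (t ε : ℝ) (ht : 0 ≤ t) (hε : 0 < ε) (h : ε ≤ 1 - t) :
    Real.log ((1 + t) / (1 - t)) ≤ 2 * t / ε := by
  have h1 : 0 < 1 - t := lt_of_lt_of_le hε h
  have hx : 0 < (1 + t) / (1 - t) := by positivity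
  have h0 := Real.log_le_sub_one_of_pos hx
  have h2 : (1 + t) / (1 - t) - 1 = 2 * t / (1 - t) := by field_simp; ring_nf
  have h3 : 2 * t / (1 - t) ≤ 2 * t / ε := by gcongr
  linarith [h2 ▸ h0]

lemma le_log_ratio (t : ℝ) (ht : 0 ≤ t) (ht1 : t < 1) :
    t ≤ Real.log ((1 + t) / (1 - t)) := by
  have h1 : 0 < 1 - t := by linarith
  have h2 : 0 < 1 + t := by linarith
  have hy : 0 < (1 - t) / (1 + t) := by positivity
  have h3 := Real.log_le_sub_one_of_pos hy
  have h4 : Real.log ((1+t)/(1-t)) = - Real.log ((1-t)/(1+t)) := by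
    rw [← Real.log_inv]; congr 1; field_simp
  rw [h4]
  have h5 : (1 - t)/(1 + t) - 1 ≤ -t := by
    rw [div_sub' h2.ne', div_le_iff₀ h2]; nlinarith
  linarith

lemma one_sub_abs_le (w : ℂ) : 1 - ‖w‖ ≤ ‖(1 + w)‖ := by
  have h := norm_add_le (1 + w) (-w)
  simp at h
  linarith

lemma one_sub_normSq_Tmob (c z : ℂ) (h : (1 + (starRingEnd ℂ) c * z) ≠ 0) :
    1 - Complex.normSq (Tmob c z) =
      (1 - Complex.normSq c) * (1 - Complex.normSq z)
        / Complex.normSq (1 + (starRingEnd ℂ) c * z) := by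
  have hkey := key_normSq (-c) z
  simp only [map_neg, neg_mul, sub_neg_eq_add, Complex.normSq_neg] at hkey
  have hkey2 : Complex.normSq (1 + (starRingEnd ℂ) c * z)
      = Complex.normSq (c + z) + (1 - Complex.normSq c) * (1 - Complex.normSq z) := by
    have h9 : Complex.normSq (-c - z) = Complex.normSq (c + z) := by
      rw [show (-c - z) = -(c + z) by ring, Complex.normSq_neg]
    linarith [hkey, h9]
  have hpos : 0 < Complex.normSq (1 + (starRingEnd ℂ) c * z) := Complex.normSq_pos.mpr h
  unfold Tmob
  rw [Complex.normSq_div]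
  rw [eq_div_iff hpos.ne', sub_mul, div_mul_cancel₀ _ hpos.ne']
  linarith [hkey2]

-- small arithmetic lemmas (kept separate so `nlinarith` works in a small context)
lemma lem_mul_lt_one (x y : ℝ) (hx0 : 0 ≤ x) (hx : x < 1) (hy0 : 0 ≤ y) (hy : y < 1) :
    x * y < 1 := by nlinarith

lemma lem_sq_le_one (x : ℝ) (hx0 : 0 ≤ x) (hx : x ^ 2 ≤ 1) : x ≤ 1 := by nlinarith

lemma lem_sq_lt_one (x : ℝ) (hx0 : 0 ≤ x) (hx : x ^ 2 < 1) : x < 1 := by nlinarith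

lemma lem_sqrt_ge (x m : ℝ) (hm : 0 ≤ m) (hx : 0 ≤ x) (h : m ^ 2 ≤ x ^ 2) : m ≤ x := by
  nlinarith

lemma lem_sq_le_four (x : ℝ) (hx0 : 0 ≤ x) (hx : x ≤ 2) : x ^ 2 ≤ 4 := by nlinarith

lemma lem_ht2 (nsuv P nsw m : ℝ) (h : nsw = nsuv + P) (hP : m ^ 2 ≤ P) (h4 : nsw ≤ 4)
    (h0 : 0 ≤ nsuv) (hm : 0 ≤ m) : nsuv ≤ (1 - m ^ 2 / 4) * nsw := by nlinarith

lemma lem_t1 (t m : ℝ) (ht0 : 0 ≤ t) (ht1 : t ≤ 1) (h : t ^ 2 ≤ 1 - m ^ 2 / 4) :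
    m ^ 2 / 8 ≤ 1 - t := by nlinarith [sq_nonneg (1 - t)]

set_option maxHeartbeats 1000000 in
theorem hypDist_Tmob_le (δ δ' : ℝ)
    (hδ0 : 0 < δ) (hδ1 : δ < 1) (hδ'0 : 0 < δ') (hδ'1 : δ' < 1) :
    ∃ C₁ > (0 : ℝ), ∀ a b z : ℂ,
      ‖a‖ ≤ δ' → ‖b‖ ≤ δ' → ‖z‖ ≤ δ →
        hypDist (Tmob a z) (Tmob b z) ≤ C₁ * hypDist a b := by
  set m : ℝ := (1 - δ' ^ 2) * (1 - δ ^ 2) / 4 with hm_def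
  have hδ2 : δ ^ 2 < 1 := by
    have := lem_mul_lt_one δ δ hδ0.le hδ1 hδ0.le hδ1; nlinarith
  have hδ'2 : δ' ^ 2 < 1 := by
    have := lem_mul_lt_one δ' δ' hδ'0.le hδ'1 hδ'0.le hδ'1; nlinarith
  have hm0 : 0 < m := by
    rw [hm_def]
    have h1 : 0 < 1 - δ' ^ 2 := by linarith
    have h2 : 0 < 1 - δ ^ 2 := by linarith
    positivity
  have hdδδ' : δ * δ' < 1 := lem_mul_lt_one δ δ' hδ0.le hδ1 hδ'0.le hδ'1
  have hdd : 0 < 1 - δ * δ' := by linarith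
  refine ⟨128 / ((1 - δ * δ') ^ 2 * m ^ 3), by positivity, ?_⟩
  intro a b z ha hb hz
  have habz : ‖((starRingEnd ℂ) a * z)‖ ≤ δ' * δ := by
    rw [norm_mul, Complex.norm_conj]
    exact mul_le_mul ha hz (norm_nonneg z) hδ'0.le
  have hbbz : ‖((starRingEnd ℂ) b * z)‖ ≤ δ' * δ := by
    rw [norm_mul, Complex.norm_conj]
    exact mul_le_mul hb hz (norm_nonneg z) hδ'0.le
  have hδ'δ : δ' * δ < 1 := lem_mul_lt_one δ' δ hδ'0.le hδ'1 hδ0.le hδ1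
  have hda_lb : 1 - δ * δ' ≤ ‖(1 + (starRingEnd ℂ) a * z)‖ := by
    have := one_sub_abs_le ((starRingEnd ℂ) a * z); nlinarith
  have hdb_lb : 1 - δ * δ' ≤ ‖(1 + (starRingEnd ℂ) b * z)‖ := by
    have := one_sub_abs_le ((starRingEnd ℂ) b * z); nlinarith
  have hda0 : (1 + (starRingEnd ℂ) a * z) ≠ 0 := by
    intro h; rw [h] at hda_lb; simp at hda_lb; linarith
  have hdb0 : (1 + (starRingEnd ℂ) b * z) ≠ 0 := by
    intro h; rw [h] at hdb_lb; simp at hdb_lb; linarith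
  set u := Tmob a z with hu_def
  set v := Tmob b z with hv_def
  -- difference formula
  have hdiff : u - v = ((a - b) + z * (a * (starRingEnd ℂ) b - (starRingEnd ℂ) a * b)
      - z ^ 2 * ((starRingEnd ℂ) a - (starRingEnd ℂ) b)) /
      ((1 + (starRingEnd ℂ) a * z) * (1 + (starRingEnd ℂ) b * z)) := by
    rw [hu_def, hv_def]; unfold Tmob
    rw [div_sub_div _ _ hda0 hdb0]
    ring
  -- numerator bound
  have hnum : ‖((a - b) + z * (a * (starRingEnd ℂ) b - (starRingEnd ℂ) a * b)
      - z ^ 2 * ((starRingEnd ℂ) a - (starRingEnd ℂ) b))‖ ≤ 4 * ‖(a - b)‖ := by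
    have h1 : ‖(a * (starRingEnd ℂ) b - (starRingEnd ℂ) a * b)‖
        ≤ 2 * δ' * ‖(a - b)‖ := by
      have heq : a * (starRingEnd ℂ) b - (starRingEnd ℂ) a * b
          = (starRingEnd ℂ) b * (a - b) + b * ((starRingEnd ℂ) b - (starRingEnd ℂ) a) := by
        ring
      rw [heq]
      have h2 : ‖((starRingEnd ℂ) b - (starRingEnd ℂ) a)‖ = ‖(a - b)‖ := by
        rw [← map_sub, Complex.norm_conj, norm_sub_rev]
      calc ‖_‖ ≤ ‖((starRingEnd ℂ) b * (a - b))‖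
            + ‖(b * ((starRingEnd ℂ) b - (starRingEnd ℂ) a))‖ := norm_add_le _ _
        _ = ‖b‖ * ‖(a - b)‖ + ‖b‖ * ‖(a - b)‖ := by
            rw [norm_mul, norm_mul, Complex.norm_conj, h2]
        _ ≤ 2 * δ' * ‖(a - b)‖ := by
            nlinarith [norm_nonneg (a - b)]
    have h3 : ‖((starRingEnd ℂ) a - (starRingEnd ℂ) b)‖ = ‖(a - b)‖ := by
      rw [← map_sub, Complex.norm_conj]
    have hsub : ∀ X Y : ℂ, ‖(X - Y)‖ ≤ ‖X‖ + ‖Y‖ := by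
      intro X Y; simpa [sub_eq_add_neg] using norm_add_le X (-Y)
    calc ‖_‖ ≤ ‖((a - b) + z * (a * (starRingEnd ℂ) b - (starRingEnd ℂ) a * b))‖
          + ‖(z ^ 2 * ((starRingEnd ℂ) a - (starRingEnd ℂ) b))‖ := hsub _ _
      _ ≤ ‖(a - b)‖ + ‖(z * (a * (starRingEnd ℂ) b - (starRingEnd ℂ) a * b))‖
          + ‖(z ^ 2 * ((starRingEnd ℂ) a - (starRingEnd ℂ) b))‖ := by
          linarith [norm_add_le (a - b) (z * (a * (starRingEnd ℂ) b - (starRingEnd ℂ) a * b))]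
      _ ≤ 4 * ‖(a - b)‖ := by
          rw [norm_mul, norm_mul, norm_pow, h3]
          have hz1 : ‖z‖ ≤ 1 := hz.trans hδ1.le
          have e1 : ‖z‖ * ‖(a * (starRingEnd ℂ) b - (starRingEnd ℂ) a * b)‖
              ≤ 1 * (2 * δ' * ‖(a - b)‖) :=
            mul_le_mul hz1 h1 (norm_nonneg _) (by norm_num)
          have e2 : ‖z‖ ^ 2 * ‖(a - b)‖ ≤ 1 * ‖(a - b)‖ := by
            have h9 : ‖z‖ ^ 2 ≤ 1 := by
              simpa using pow_le_pow_left₀ (norm_nonneg z) hz1 2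
            exact mul_le_mul_of_nonneg_right h9 (norm_nonneg _)
          nlinarith [norm_nonneg (a - b)]
  have huv : ‖(u - v)‖ ≤ 4 * ‖(a - b)‖ / (1 - δ * δ') ^ 2 := by
    have hA0 : (0:ℝ) < ‖(1 + (starRingEnd ℂ) a * z)‖ := lt_of_lt_of_le hdd hda_lb
    have hB0 : (0:ℝ) < ‖(1 + (starRingEnd ℂ) b * z)‖ := lt_of_lt_of_le hdd hdb_lb
    rw [hdiff, norm_div, norm_mul]
    rw [div_le_div_iff₀ (mul_pos hA0 hB0) (pow_pos hdd 2)]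
    have hAB : (1 - δ * δ') * (1 - δ * δ')
        ≤ ‖(1 + (starRingEnd ℂ) a * z)‖ * ‖(1 + (starRingEnd ℂ) b * z)‖ :=
      mul_le_mul hda_lb hdb_lb hdd.le (norm_nonneg _)
    nlinarith [norm_nonneg (a - b), hnum,
      norm_nonneg ((a - b) + z * (a * (starRingEnd ℂ) b - (starRingEnd ℂ) a * b)
        - z ^ 2 * ((starRingEnd ℂ) a - (starRingEnd ℂ) b))]
  -- bounds on normSq of u, v
  have sqle : ∀ (c : ℂ) (r : ℝ), ‖c‖ ≤ r → Complex.normSq c ≤ r ^ 2 := by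
    intro c r hc
    rw [← Complex.sq_norm]
    exact pow_le_pow_left₀ (norm_nonneg c) hc 2
  have one_add_abs : ∀ X : ℂ, ‖(1 + X)‖ ≤ 1 + ‖X‖ := by
    intro X; simpa using norm_add_le 1 X
  have hns_bound : ∀ c : ℂ, ‖c‖ ≤ δ' →
      (1 + (starRingEnd ℂ) c * z) ≠ 0 → m ≤ 1 - Complex.normSq (Tmob c z) := by
    intro c hc hc0
    rw [one_sub_normSq_Tmob c z hc0]
    have h1 : Complex.normSq c ≤ δ' ^ 2 := sqle c δ' hc
    have h2 : Complex.normSq z ≤ δ ^ 2 := sqle z δ hz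
    have h3 : Complex.normSq (1 + (starRingEnd ℂ) c * z) ≤ 4 := by
      have hcz : ‖((starRingEnd ℂ) c * z)‖ ≤ δ' * δ := by
        rw [norm_mul, Complex.norm_conj]
        exact mul_le_mul hc hz (norm_nonneg z) hδ'0.le
      have habs2 : ‖(1 + (starRingEnd ℂ) c * z)‖ ≤ 2 := by
        have := one_add_abs ((starRingEnd ℂ) c * z); linarith
      rw [← Complex.sq_norm]
      exact lem_sq_le_four _ (norm_nonneg _) habs2
    have h4 : 0 < Complex.normSq (1 + (starRingEnd ℂ) c * z) := Complex.normSq_pos.mpr hc0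
    rw [hm_def]
    apply div_le_div₀
    · apply mul_nonneg <;> linarith [Complex.normSq_nonneg c, Complex.normSq_nonneg z]
    · apply mul_le_mul <;> linarith [Complex.normSq_nonneg c, Complex.normSq_nonneg z]
    · exact h4
    · exact h3
  have hu_m : m ≤ 1 - Complex.normSq u := hns_bound a ha hda0
  have hv_m : m ≤ 1 - Complex.normSq v := hns_bound b hb hdb0
  have habs_u : ‖u‖ ≤ 1 := by
    apply lem_sq_le_one _ (norm_nonneg u)
    rw [Complex.sq_norm]; linarith
  have habs_v : ‖v‖ ≤ 1 := by
    apply lem_sq_le_one _ (norm_nonneg v)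
    rw [Complex.sq_norm]; linarith
  -- the quantity w = 1 - conj u * v
  set w : ℂ := 1 - (starRingEnd ℂ) u * v with hw_def
  have hw_ns : Complex.normSq w
      = Complex.normSq (u - v) + (1 - Complex.normSq u) * (1 - Complex.normSq v) :=
    key_normSq u v
  have hP : m * m ≤ (1 - Complex.normSq u) * (1 - Complex.normSq v) :=
    mul_le_mul hu_m hv_m hm0.le (by linarith)
  have hP' : m ^ 2 ≤ (1 - Complex.normSq u) * (1 - Complex.normSq v) := by
    rw [sq]; exact hP
  have hw_ns_lb : m ^ 2 ≤ Complex.normSq w := by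
    linarith [Complex.normSq_nonneg (u - v)]
  have hw_lb : m ≤ ‖w‖ := by
    apply lem_sqrt_ge _ _ hm0.le (norm_nonneg w)
    rw [Complex.sq_norm]; exact hw_ns_lb
  have hw_ub : ‖w‖ ≤ 2 := by
    have h1 : ‖((starRingEnd ℂ) u * v)‖ ≤ 1 := by
      rw [norm_mul, Complex.norm_conj]
      exact mul_le_one₀ habs_u (norm_nonneg v) habs_v
    have h2 : ‖(1 + -((starRingEnd ℂ) u * v))‖
        ≤ 1 + ‖(-((starRingEnd ℂ) u * v))‖ := one_add_abs _
    simp only [norm_neg] at h2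
    rw [hw_def, sub_eq_add_neg]
    linarith
  have hw_ns_ub : Complex.normSq w ≤ 4 := by
    rw [← Complex.sq_norm]
    exact lem_sq_le_four _ (norm_nonneg w) hw_ub
  have hw0 : w ≠ 0 := by
    intro h; rw [h] at hw_lb; simp at hw_lb; linarith
  set t : ℝ := ‖((u - v) / w)‖ with ht_def
  have ht0 : 0 ≤ t := norm_nonneg _
  have ht_eq : t = ‖(u - v)‖ / ‖w‖ := by rw [ht_def, norm_div]
  have ht_sq : t ^ 2 = Complex.normSq (u - v) / Complex.normSq w := by
    rw [ht_eq, div_pow, Complex.sq_norm, Complex.sq_norm]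
  have ht2 : t ^ 2 ≤ 1 - m ^ 2 / 4 := by
    rw [ht_sq, div_le_iff₀ (Complex.normSq_pos.mpr hw0)]
    exact lem_ht2 _ _ _ m hw_ns hP' hw_ns_ub (Complex.normSq_nonneg (u - v)) hm0.le
  have ht_le1 : t ≤ 1 := by
    apply lem_sq_le_one _ ht0
    nlinarith [sq_nonneg m]
  have ht1 : m ^ 2 / 8 ≤ 1 - t := lem_t1 t m ht0 ht_le1 ht2
  -- lower bound on hypDist a b
  have hab_ub : ‖((starRingEnd ℂ) a * b)‖ ≤ δ' * δ' := by
    rw [norm_mul, Complex.norm_conj]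
    exact mul_le_mul ha hb (norm_nonneg b) hδ'0.le
  have hδ'δ' : δ' * δ' < 1 := lem_mul_lt_one δ' δ' hδ'0.le hδ'1 hδ'0.le hδ'1
  have hab_lb : 1 - δ' * δ' ≤ ‖(1 - (starRingEnd ℂ) a * b)‖ := by
    have h9 := one_sub_abs_le (-((starRingEnd ℂ) a * b))
    simp only [norm_neg] at h9
    rw [← sub_eq_add_neg] at h9
    linarith
  have hab0 : (1 - (starRingEnd ℂ) a * b) ≠ 0 := by
    intro h; rw [h] at hab_lb; simp at hab_lb; linarith
  have hab_ub2 : ‖(1 - (starRingEnd ℂ) a * b)‖ ≤ 2 := by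
    have h2 := one_add_abs (-((starRingEnd ℂ) a * b))
    simp only [norm_neg] at h2
    rw [← sub_eq_add_neg] at h2
    linarith
  set s : ℝ := ‖((a - b) / (1 - (starRingEnd ℂ) a * b))‖ with hs_def
  have hs0 : 0 ≤ s := norm_nonneg _
  have hs_eq : s = ‖(a - b)‖ / ‖(1 - (starRingEnd ℂ) a * b)‖ := by
    rw [hs_def, norm_div]
  have hs_lb : ‖(a - b)‖ / 2 ≤ s := by
    rw [hs_eq]
    gcongr
  have hs_lt1 : s < 1 := by
    apply lem_sq_lt_one _ hs0
    have hnsa : Complex.normSq a ≤ δ' ^ 2 := sqle a δ' ha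
    have hnsb : Complex.normSq b ≤ δ' ^ 2 := sqle b δ' hb
    have hposP : 0 < (1 - Complex.normSq a) * (1 - Complex.normSq b) := by
      apply mul_pos <;> linarith
    have hs_sq : s ^ 2 = Complex.normSq (a - b) / Complex.normSq (1 - (starRingEnd ℂ) a * b) := by
      rw [hs_eq, div_pow, Complex.sq_norm, Complex.sq_norm]
    rw [hs_sq, div_lt_one (Complex.normSq_pos.mpr hab0)]
    linarith [key_normSq a b]
  have hlow : s ≤ hypDist a b := le_log_ratio s hs0 hs_lt1
  have hH0 : 0 ≤ hypDist a b := hs0.trans hlow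
  have habd : ‖(a - b)‖ ≤ 2 * hypDist a b := by
    have := hs_lb.trans hlow; linarith
  -- final chain
  have hfinal1 : hypDist u v ≤ 16 * t / m ^ 2 := by
    have h := log_ratio_le t (m ^ 2 / 8) ht0 (by positivity) ht1
    have heq : (2 : ℝ) * t / (m ^ 2 / 8) = 16 * t / m ^ 2 := by
      rw [div_div_eq_mul_div]; ring
    calc hypDist u v = Real.log ((1 + t) / (1 - t)) := rfl
      _ ≤ 2 * t / (m ^ 2 / 8) := h
      _ = 16 * t / m ^ 2 := heq
  have h1 : t ≤ ‖(u - v)‖ / m := by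
    rw [ht_eq]; gcongr
  have h2 : ‖(u - v)‖ ≤ 8 * hypDist a b / (1 - δ * δ') ^ 2 := by
    calc ‖(u - v)‖ ≤ 4 * ‖(a - b)‖ / (1 - δ * δ') ^ 2 := huv
      _ ≤ 8 * hypDist a b / (1 - δ * δ') ^ 2 :=
          div_le_div_of_nonneg_right (by linarith) (pow_pos hdd 2).le
  have h3 : t ≤ 8 * hypDist a b / ((1 - δ * δ') ^ 2 * m) := by
    calc t ≤ ‖(u - v)‖ / m := h1
      _ ≤ (8 * hypDist a b / (1 - δ * δ') ^ 2) / m :=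
          div_le_div_of_nonneg_right h2 hm0.le
      _ = 8 * hypDist a b / ((1 - δ * δ') ^ 2 * m) := by rw [div_div]
  have h4 : 16 * t / m ^ 2 ≤ 16 * (8 * hypDist a b / ((1 - δ * δ') ^ 2 * m)) / m ^ 2 :=
    div_le_div_of_nonneg_right (by linarith) (pow_pos hm0 2).le
  have h5 : 16 * (8 * hypDist a b / ((1 - δ * δ') ^ 2 * m)) / m ^ 2
      = 128 / ((1 - δ * δ') ^ 2 * m ^ 3) * hypDist a b := by
    field_simp
    ring
  calc hypDist u v ≤ 16 * t / m ^ 2 := hfinal1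
    _ ≤ 16 * (8 * hypDist a b / ((1 - δ * δ') ^ 2 * m)) / m ^ 2 := h4
    _ = 128 / ((1 - δ * δ') ^ 2 * m ^ 3) * hypDist a b := h5
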